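/- Assume sup_z q_φ(z)/p(z|x) < C, the kurtosis Kurt[∂_{φ_i} log q_φ] = E_{q_φ}[(∂_{φ_i} log q_φ)^4] / (E_{q_φ}[(∂_{φ_i} log q_φ)²])² is finite, and E_{q_φ}[log(q_φ/p(x,·))] = KL(q_φ || p(·|x)) − log p(x) ≠ 0. Then |δ_i / E_{q_φ}[f_φ]| ≤ 2√(C · Kurt[∂_{φ_i} log q_φ]) / |√KL − (log p(x))/√KL|, where δ_i = Cov_{q_φ}(f_φ, (∂_{φ_i} log q_φ)²) / Var_{q_φ}(∂_{φ_i} log q_φ), f_φ = log(q_φ/p(x,·)), and KL = KL(q_φ(z) || p(z|x)). -/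
import Mathlib


open MeasureTheory

private lemma exp_quad {s : ℝ} (hs : 0 ≤ s) : 1 + s + s ^ 2 / 4 ≤ Real.exp s := by
  have h := Real.add_one_le_exp (s / 2)
  have h2 : Real.exp (s / 2) * Real.exp (s / 2) = Real.exp s := by
    rw [← Real.exp_add]; ring_nf
  nlinarith [Real.exp_pos (s / 2)]

private lemma key_small {t : ℝ} (h0 : 0 < t) (h1 : t ≤ 1) :
    t * Real.log t ^ 2 ≤ 4 * (t * Real.log t - t + 1) := by
  set s : ℝ := -Real.log t with hsdef
  have hs : 0 ≤ s := by
    simp only [hsdef, neg_nonneg]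
    exact Real.log_nonpos h0.le h1
  have ht : t = Real.exp (-s) := by simp [hsdef, Real.exp_log h0]
  have hP : (s + 2) ^ 2 ≤ 4 * Real.exp s := by
    have h := exp_quad hs; nlinarith
  have hlog : Real.log t = -s := by simp [hsdef]
  rw [hlog, ht]
  have hee : Real.exp (-s) * Real.exp s = 1 := by rw [← Real.exp_add]; simp
  have hpos : 0 < Real.exp (-s) := Real.exp_pos _
  nlinarith [mul_le_mul_of_nonneg_left hP hpos.le]

private lemma key_large' {s : ℝ} (hs : 0 ≤ s) :
    s ^ 2 ≤ 4 * (s * Real.exp s - Real.exp s + 1) := by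
  rcases le_total s 1 with h1 | h1
  · have h := Real.exp_bound' hs h1 (n := 3) (by norm_num)
    simp [Finset.sum_range_succ, Nat.factorial] at h
    nlinarith [sq_nonneg (s - 1/2), sq_nonneg s, pow_nonneg hs 3]
  · have h := exp_quad hs
    nlinarith [pow_nonneg hs 3, sq_nonneg s]

private lemma key_large {t : ℝ} (h1 : 1 ≤ t) :
    Real.log t ^ 2 ≤ 4 * (t * Real.log t - t + 1) := by
  have h0 : (0:ℝ) < t := lt_of_lt_of_le one_pos h1
  have hs : 0 ≤ Real.log t := Real.log_nonneg h1
  have ht : Real.exp (Real.log t) = t := Real.exp_log h0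
  have := key_large' hs
  rw [ht] at this
  linarith

private lemma key_pt {t Cc : ℝ} (h0 : 0 < t) (htC : t ≤ Cc) (hC1 : 1 ≤ Cc) :
    t * Real.log t ^ 2 ≤ 4 * Cc * (t * Real.log t - t + 1) := by
  rcases le_total t 1 with h1 | h1
  · have h := key_small h0 h1
    have hg : 0 ≤ t * Real.log t - t + 1 := by nlinarith [sq_nonneg (Real.log t), h0.le]
    nlinarith
  · have h := key_large h1
    have hsq : 0 ≤ Real.log t ^ 2 := sq_nonneg _
    nlinarith

private lemma weighted_cs {α : Type*} [MeasurableSpace α] (μ : Measure α)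
    (w g h : α → ℝ) (hw : ∀ z, 0 ≤ w z)
    (hg2 : Integrable (fun z => w z * g z ^ 2) μ)
    (hh2 : Integrable (fun z => w z * h z ^ 2) μ)
    (hgh : Integrable (fun z => w z * (g z * h z)) μ) :
    (∫ z, w z * (g z * h z) ∂μ) ^ 2 ≤
      (∫ z, w z * g z ^ 2 ∂μ) * (∫ z, w z * h z ^ 2 ∂μ) := by
  set A := ∫ z, w z * h z ^ 2 ∂μ with hA
  set Bv := 2 * ∫ z, w z * (g z * h z) ∂μ with hB
  set Cv := ∫ z, w z * g z ^ 2 ∂μ with hCv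
  have key : ∀ x : ℝ, 0 ≤ A * (x * x) + Bv * x + Cv := by
    intro x
    have expand : A * (x * x) + Bv * x + Cv
        = ∫ z, w z * (g z + x * h z) ^ 2 ∂μ := by
      rw [hA, hB, hCv]
      have : (fun z => w z * (g z + x * h z) ^ 2)
          = fun z => x * x * (w z * h z ^ 2) + 2 * x * (w z * (g z * h z))
            + w z * g z ^ 2 := by
        funext z; ring
      have i1 : Integrable (fun z => x * x * (w z * h z ^ 2)
          + 2 * x * (w z * (g z * h z))) μ :=
        (hh2.const_mul (x * x)).add (hgh.const_mul (2 * x))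
      rw [this, integral_add i1 hg2,
        integral_add (hh2.const_mul (x * x)) (hgh.const_mul (2 * x)),
        MeasureTheory.integral_const_mul, MeasureTheory.integral_const_mul]
      ring
    rw [expand]
    exact integral_nonneg fun z => mul_nonneg (hw z) (sq_nonneg _)
  have hd := discrim_le_zero key
  rw [discrim, hB] at hd
  nlinarith [hd]

set_option maxHeartbeats 1000000 in
/-- Proposition 2 of the paper: if `sup_z q_φ(z)/p(z|x) < C`, the kurtosis of the score
component `B = ∂_{φ_i} log q_φ` is finite, and `E_{q_φ}[f_φ] = KL − log p(x) ≠ 0`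
(with `f_φ = log(q_φ/p(x,·))`, `p(x,z) = p(x)·p(z|x)`), then the relative control
variate correction satisfies
`|δ_i / E[f_φ]| ≤ 2 √(C·Kurt) / |√KL − log p(x)/√KL|`. -/
theorem delta_cv_relative_bound {α : Type*} [MeasurableSpace α]
    (μ : Measure α) (q ppost B : α → ℝ) (px C KL kurt δ Ef : ℝ)
    (hqm : Measurable q) (hpm : Measurable ppost)
    (hq0 : ∀ z, 0 < q z) (hp0 : ∀ z, 0 < ppost z) (hpx : 0 < px)
    (hq1 : ∫ z, q z ∂μ = 1) (hp1 : ∫ z, ppost z ∂μ = 1)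
    (hC : 0 < C) (hsup : ∀ z, q z < C * ppost z)
    (hKL : KL = ∫ z, q z * Real.log (q z / ppost z) ∂μ) (hKLpos : 0 < KL)
    (hB0 : ∫ z, q z * B z ∂μ = 0)
    (hB2pos : 0 < ∫ z, q z * (B z) ^ 2 ∂μ)
    (hkurt : kurt = (∫ z, q z * (B z) ^ 4 ∂μ) / (∫ z, q z * (B z) ^ 2 ∂μ) ^ 2)
    (hEf : Ef = ∫ z, q z * Real.log (q z / (px * ppost z)) ∂μ)
    (hEfKL : Ef = KL - Real.log px) (hEfne : Ef ≠ 0)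
    (hδ : δ = ((∫ z, q z * (Real.log (q z / (px * ppost z)) * (B z) ^ 2) ∂μ)
        - (∫ z, q z * Real.log (q z / (px * ppost z)) ∂μ) * (∫ z, q z * (B z) ^ 2 ∂μ))
      / ∫ z, q z * (B z) ^ 2 ∂μ)
    (hint1 : Integrable (fun z => q z * Real.log (q z / ppost z)) μ)
    (hint2 : Integrable (fun z => q z * (Real.log (q z / ppost z)) ^ 2) μ)
    (hint3 : Integrable (fun z => q z * (B z) ^ 2) μ)
    (hint4 : Integrable (fun z => q z * (B z) ^ 4) μ)
    (hint5 : Integrable (fun z => q z * (Real.log (q z / (px * ppost z)) * (B z) ^ 2)) μ)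
    (hint6 : Integrable (fun z => q z * Real.log (q z / (px * ppost z))) μ) :
    |δ / Ef| ≤ 2 * Real.sqrt (C * kurt)
      / |Real.sqrt KL - Real.log px / Real.sqrt KL| := by
  -- basic integrability and C ≥ 1
  have hqInt : Integrable q μ := by
    by_contra h
    rw [integral_undef h] at hq1; exact one_ne_zero hq1.symm
  have hpInt : Integrable ppost μ := by
    by_contra h
    rw [integral_undef h] at hp1; exact one_ne_zero hp1.symm
  have hC1 : 1 ≤ C := by
    have hmono : ∫ z, q z ∂μ ≤ ∫ z, C * ppost z ∂μ :=
      integral_mono hqInt (hpInt.const_mul C) fun z => (hsup z).le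
    rw [hq1, MeasureTheory.integral_const_mul, hp1, mul_one] at hmono
    exact hmono
  -- log decomposition
  have hfz : ∀ z, Real.log (q z / (px * ppost z))
      = Real.log (q z / ppost z) - Real.log px := by
    intro z
    rw [Real.log_div (hq0 z).ne' (mul_pos hpx (hp0 z)).ne',
      Real.log_div (hq0 z).ne' (hp0 z).ne', Real.log_mul hpx.ne' (hp0 z).ne']
    ring
  -- second moment bound : ∫ q L² ≤ 4 C KL
  have hpt : ∀ z, q z * (Real.log (q z / ppost z)) ^ 2
      ≤ 4 * C * (q z * Real.log (q z / ppost z) - q z + ppost z) := by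
    intro z
    obtain ⟨t, ht, hq⟩ : ∃ t, 0 < t ∧ q z = t * ppost z :=
      ⟨q z / ppost z, div_pos (hq0 z) (hp0 z), (div_mul_cancel₀ _ (hp0 z).ne').symm⟩
    rw [hq]
    have hl : t * ppost z / ppost z = t := mul_div_cancel_right₀ t (hp0 z).ne'
    rw [hl]
    have htC' : t ≤ C := by
      have h := (hsup z).le
      rw [hq] at h
      exact le_of_mul_le_mul_right h (hp0 z)
    have hk := key_pt ht htC' hC1
    nlinarith [mul_le_mul_of_nonneg_right hk (hp0 z).le]
  have iR : Integrable (fun z => 4 * C * (q z * Real.log (q z / ppost z)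
      - q z + ppost z)) μ := ((hint1.sub hqInt).add hpInt).const_mul (4 * C)
  have iSub : Integrable (fun z => q z * Real.log (q z / ppost z) - q z) μ :=
    hint1.sub hqInt
  have hM : ∫ z, q z * (Real.log (q z / ppost z)) ^ 2 ∂μ ≤ 4 * C * KL := by
    have hmono := integral_mono hint2 iR hpt
    rw [MeasureTheory.integral_const_mul, integral_add iSub hpInt,
      integral_sub hint1 hqInt, hq1, hp1, ← hKL] at hmono
    linarith
  -- variance bound : ∫ q (L − KL)² ≤ 4 C KL
  have expandV : (fun z => q z * (Real.log (q z / ppost z) - KL) ^ 2)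
      = fun z => (q z * (Real.log (q z / ppost z)) ^ 2
        - 2 * KL * (q z * Real.log (q z / ppost z))) + KL ^ 2 * q z := by
    funext z; ring
  have iV : Integrable (fun z => q z * (Real.log (q z / ppost z) - KL) ^ 2) μ := by
    rw [expandV]
    exact (hint2.sub (hint1.const_mul (2 * KL))).add (hqInt.const_mul (KL ^ 2))
  have hV : ∫ z, q z * (Real.log (q z / ppost z) - KL) ^ 2 ∂μ ≤ 4 * C * KL := by
    have iV1 : Integrable (fun z => q z * (Real.log (q z / ppost z)) ^ 2
        - 2 * KL * (q z * Real.log (q z / ppost z))) μ :=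
      hint2.sub (hint1.const_mul (2 * KL))
    have iV2 : Integrable (fun z => KL ^ 2 * q z) μ := hqInt.const_mul (KL ^ 2)
    rw [expandV, integral_add iV1 iV2,
      integral_sub hint2 (hint1.const_mul (2 * KL)),
      MeasureTheory.integral_const_mul, MeasureTheory.integral_const_mul,
      hq1, ← hKL]
    nlinarith [sq_nonneg KL]
  -- notation for moments
  set I2 := ∫ z, q z * (B z) ^ 2 ∂μ with hI2
  set I4 := ∫ z, q z * (B z) ^ 4 ∂μ with hI4
  have hI4nn : 0 ≤ I4 := by
    rw [hI4]
    exact integral_nonneg fun z => mul_nonneg (hq0 z).le (by positivity)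
  -- numerator as centered covariance
  have iN : Integrable (fun z => q z * ((Real.log (q z / ppost z) - KL) * (B z) ^ 2)) μ := by
    have e : (fun z => q z * ((Real.log (q z / ppost z) - KL) * (B z) ^ 2))
        = fun z => q z * (Real.log (q z / (px * ppost z)) * (B z) ^ 2)
          - Ef * (q z * (B z) ^ 2) := by
      funext z; rw [hfz z, hEfKL]; ring
    rw [e]
    exact hint5.sub (hint3.const_mul Ef)
  have hNval : (∫ z, q z * (Real.log (q z / (px * ppost z)) * (B z) ^ 2) ∂μ)
      - (∫ z, q z * Real.log (q z / (px * ppost z)) ∂μ) * I2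
      = ∫ z, q z * ((Real.log (q z / ppost z) - KL) * (B z) ^ 2) ∂μ := by
    have e : (fun z => q z * (Real.log (q z / (px * ppost z)) * (B z) ^ 2))
        = fun z => q z * ((Real.log (q z / ppost z) - KL) * (B z) ^ 2)
          + Ef * (q z * (B z) ^ 2) := by
      funext z; rw [hfz z, hEfKL]; ring
    rw [e, integral_add iN (hint3.const_mul Ef), MeasureTheory.integral_const_mul,
      ← hEf, ← hI2]
    ring
  -- Cauchy–Schwarz
  have iH2 : Integrable (fun z => q z * ((B z) ^ 2) ^ 2) μ := by
    have : (fun z => q z * ((B z) ^ 2) ^ 2) = fun z => q z * (B z) ^ 4 := by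
      funext z; ring
    rw [this]; exact hint4
  have hCS := weighted_cs μ q (fun z => Real.log (q z / ppost z) - KL)
    (fun z => (B z) ^ 2) (fun z => (hq0 z).le) iV iH2 iN
  have hI4eq : ∫ z, q z * ((B z) ^ 2) ^ 2 ∂μ = I4 := by
    have : (fun z => q z * ((B z) ^ 2) ^ 2) = fun z => q z * (B z) ^ 4 := by
      funext z; ring
    rw [this]
  rw [hI4eq] at hCS
  have hCS' : (∫ z, q z * ((Real.log (q z / ppost z) - KL) * (B z) ^ 2) ∂μ) ^ 2
      ≤ (∫ z, q z * (Real.log (q z / ppost z) - KL) ^ 2 ∂μ) * I4 := by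
    simpa using hCS
  have hN2 : (∫ z, q z * ((Real.log (q z / ppost z) - KL) * (B z) ^ 2) ∂μ) ^ 2
      ≤ 4 * C * KL * I4 :=
    le_trans hCS' (by nlinarith [hI4nn, hV])
  -- I4 = kurt * I2²
  have hI4k : I4 = kurt * I2 ^ 2 := by
    rw [hkurt]; field_simp
  have hkurtnn : 0 ≤ kurt := by
    rw [hkurt]; positivity
  -- bound |N|
  set N := ∫ z, q z * ((Real.log (q z / ppost z) - KL) * (B z) ^ 2) ∂μ with hN
  have hNabs : |N| ≤ 2 * I2 * Real.sqrt (C * kurt * KL) := by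
    have h1 : |N| = Real.sqrt (N ^ 2) := (Real.sqrt_sq_eq_abs N).symm
    have h2 : Real.sqrt (N ^ 2) ≤ Real.sqrt (4 * C * KL * I4) :=
      Real.sqrt_le_sqrt hN2
    have h3 : 4 * C * KL * I4 = (2 * I2) ^ 2 * (C * kurt * KL) := by
      rw [hI4k]; ring
    have h4 : Real.sqrt ((2 * I2) ^ 2 * (C * kurt * KL))
        = 2 * I2 * Real.sqrt (C * kurt * KL) := by
      rw [Real.sqrt_mul (sq_nonneg _), Real.sqrt_sq (by linarith : (0:ℝ) ≤ 2 * I2)]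
    rw [h1, ← h4, ← h3]
    exact h2
  -- bound |δ|
  have hδval : δ = N / I2 := by rw [hδ, hNval]
  have hδabs : |δ| ≤ 2 * Real.sqrt (C * kurt) * Real.sqrt KL := by
    rw [hδval, abs_div, abs_of_pos hB2pos]
    rw [div_le_iff₀ hB2pos]
    calc |N| ≤ 2 * I2 * Real.sqrt (C * kurt * KL) := hNabs
      _ = 2 * Real.sqrt (C * kurt) * Real.sqrt KL * I2 := by
          rw [Real.sqrt_mul (by positivity : (0:ℝ) ≤ C * kurt)]
          ring
  -- denominator
  have hsKpos : 0 < Real.sqrt KL := Real.sqrt_pos.2 hKLpos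
  have hD : Real.sqrt KL * (Real.sqrt KL - Real.log px / Real.sqrt KL)
      = KL - Real.log px := by
    rw [mul_sub, Real.mul_self_sqrt hKLpos.le, mul_div_cancel₀ _ hsKpos.ne']
  have hEfabs : |Ef| = Real.sqrt KL * |Real.sqrt KL - Real.log px / Real.sqrt KL| := by
    rw [hEfKL, ← hD, abs_mul, abs_of_pos hsKpos]
  have hDpos : 0 < |Real.sqrt KL - Real.log px / Real.sqrt KL| := by
    have h := abs_pos.2 hEfne
    rw [hEfabs] at h
    rcases mul_pos_iff.mp h with ⟨_, h2⟩ | ⟨h1, _⟩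
    · exact h2
    · exact absurd hsKpos (not_lt.2 h1.le)
  -- conclusion
  rw [abs_div, hEfabs, div_le_div_iff₀ (by positivity) hDpos]
  calc |δ| * |Real.sqrt KL - Real.log px / Real.sqrt KL|
      ≤ (2 * Real.sqrt (C * kurt) * Real.sqrt KL)
        * |Real.sqrt KL - Real.log px / Real.sqrt KL| :=
        mul_le_mul_of_nonneg_right hδabs (abs_nonneg _)
    _ = 2 * Real.sqrt (C * kurt)
        * (Real.sqrt KL * |Real.sqrt KL - Real.log px / Real.sqrt KL|) := by ring
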